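/- For every integer k ≥ 5, the chain of strict inequalities u_1(k) < u_2(k) < u_3(k) < u_4(k) holds. -/

import Mathlib

noncomputable section

def u1 (k : ℕ) : ℝ := -(2 * ((k : ℝ) - 1)) / ((k : ℝ) - 2)

def u2 (k : ℕ) : ℝ :=
  ((k : ℝ) - 4 - Real.sqrt (17 * (k : ℝ) ^ 2 - 48 * (k : ℝ) + 32)) / (2 * ((k : ℝ) - 2))

def u3 (k : ℕ) : ℝ :=
  4 * ((k : ℝ) - 1) * (-3 * (k : ℝ) + 4 - 2 * Real.sqrt ((k : ℝ) - 1)) /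
    (((k : ℝ) - 2) * (9 * (k : ℝ) - 10))

def u4 (k : ℕ) : ℝ :=
  -1 - (k : ℝ) /
    (3 * (k : ℝ) ^ 2 - 2 * ((k : ℝ) - 1) ^ 2 * Real.sqrt (2 * (k : ℝ) / ((k : ℝ) - 1)) -
      4 * (k : ℝ))

set_option maxHeartbeats 2000000 in
theorem u_chain (k : ℕ) (hk : 5 ≤ k) :
    u1 k < u2 k ∧ u2 k < u3 k ∧ u3 k < u4 k := by
  have hx : (5 : ℝ) ≤ (k : ℝ) := by exact_mod_cast hk
  unfold u1 u2 u3 u4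
  set x : ℝ := (k : ℝ) with hxdef
  have hx2 : (0 : ℝ) < x - 2 := by linarith
  have h9 : (0 : ℝ) < 9 * x - 10 := by linarith
  have hx1 : (0 : ℝ) < x - 1 := by linarith
  have t5 : (0 : ℝ) ≤ x - 5 := by linarith
  have t2 : (0 : ℝ) ≤ (x - 5) ^ 2 := pow_nonneg t5 2
  have t3 : (0 : ℝ) ≤ (x - 5) ^ 3 := pow_nonneg t5 3
  have t4 : (0 : ℝ) ≤ (x - 5) ^ 4 := pow_nonneg t5 4
  set s1 : ℝ := Real.sqrt (17 * x ^ 2 - 48 * x + 32) with hs1def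
  set s2 : ℝ := Real.sqrt (x - 1) with hs2def
  set s3 : ℝ := Real.sqrt (2 * x / (x - 1)) with hs3def
  have hs1nn : 0 ≤ s1 := Real.sqrt_nonneg _
  have hs2nn : 0 ≤ s2 := Real.sqrt_nonneg _
  have hs3nn : 0 ≤ s3 := Real.sqrt_nonneg _
  have hs1sq : s1 ^ 2 = 17 * x ^ 2 - 48 * x + 32 := Real.sq_sqrt (by nlinarith)
  have hs2sq : s2 ^ 2 = x - 1 := Real.sq_sqrt (by linarith)
  have hs2ge : 2 ≤ s2 := by
    rw [hs2def, Real.le_sqrt (by norm_num) (by linarith)]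
    norm_num
    linarith
  -- Part 1 : u1 < u2
  have part1 : -(2 * (x - 1)) / (x - 2) < (x - 4 - s1) / (2 * (x - 2)) := by
    have hs1lt : s1 < 5 * x - 8 := by
      rw [hs1def, Real.sqrt_lt' (by linarith)]
      nlinarith [sq_nonneg (x - 2)]
    rw [div_lt_div_iff₀ hx2 (by linarith)]
    nlinarith [mul_pos hx2 (sub_pos.mpr hs1lt)]
  -- Part 2 : u2 < u3
  have hQpos : (0 : ℝ) < 288 * x ^ 4 - 472 * x ^ 3 - 1456 * x ^ 2 + 3360 * x - 1728 := by
    linarith [t5, t2, t3, t4]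
  have hRpos : (0 : ℝ) <
      82944 * x ^ 8 - 1387008 * x ^ 7 + 9623104 * x ^ 6 - 36236032 * x ^ 5 +
        81348352 * x ^ 4 - 112035840 * x ^ 3 + 92888064 * x ^ 2 - 42577920 * x + 8294400 := by
    linarith [t5, t2, t3, t4, pow_nonneg t5 5, pow_nonneg t5 6, pow_nonneg t5 7,
      pow_nonneg t5 8]
  have hkey2 : 32 * (x - 1) * (33 * x ^ 2 - 102 * x + 72) * s2 <
      288 * x ^ 4 - 472 * x ^ 3 - 1456 * x ^ 2 + 3360 * x - 1728 := by
    by_contra h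
    push_neg at h
    have hsq : (288 * x ^ 4 - 472 * x ^ 3 - 1456 * x ^ 2 + 3360 * x - 1728) ^ 2 ≤
        (32 * (x - 1) * (33 * x ^ 2 - 102 * x + 72) * s2) ^ 2 :=
      pow_le_pow_left₀ hQpos.le h 2
    have hrw : (32 * (x - 1) * (33 * x ^ 2 - 102 * x + 72) * s2) ^ 2 =
        1024 * (x - 1) ^ 3 * (33 * x ^ 2 - 102 * x + 72) ^ 2 := by
      linear_combination (1024 * (x - 1) ^ 2 * (33 * x ^ 2 - 102 * x + 72) ^ 2) * hs2sq
    rw [hrw] at hsq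
    linarith [hsq, hRpos]
  have hkey : 33 * x ^ 2 - 102 * x + 72 + 16 * (x - 1) * s2 < (9 * x - 10) * s1 := by
    by_contra h
    push_neg at h
    have hlnn : 0 ≤ (9 * x - 10) * s1 := mul_nonneg (by linarith) hs1nn
    have hsq : ((9 * x - 10) * s1) ^ 2 ≤
        (33 * x ^ 2 - 102 * x + 72 + 16 * (x - 1) * s2) ^ 2 := pow_le_pow_left₀ hlnn h 2
    have hL : ((9 * x - 10) * s1) ^ 2 = (9 * x - 10) ^ 2 * (17 * x ^ 2 - 48 * x + 32) := by
      linear_combination (9 * x - 10) ^ 2 * hs1sq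
    have hR : (33 * x ^ 2 - 102 * x + 72 + 16 * (x - 1) * s2) ^ 2 =
        (33 * x ^ 2 - 102 * x + 72) ^ 2 +
          32 * (x - 1) * (33 * x ^ 2 - 102 * x + 72) * s2 + 256 * (x - 1) ^ 3 := by
      linear_combination (256 * (x - 1) ^ 2) * hs2sq
    rw [hL, hR] at hsq
    linarith [hsq, hkey2]
  have part2 : (x - 4 - s1) / (2 * (x - 2)) <
      4 * (x - 1) * (-3 * x + 4 - 2 * s2) / ((x - 2) * (9 * x - 10)) := by
    rw [div_lt_div_iff₀ (by linarith) (mul_pos hx2 h9)]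
    nlinarith [mul_pos hx2 (sub_pos.mpr hkey)]
  -- Part 3 : u3 < u4
  have hE : (0 : ℝ) < 12 * x ^ 2 + 17 * x - 99 := by nlinarith
  have hs3lt : s3 < 99 * (2 * x - 1) / (140 * (x - 1)) := by
    rw [hs3def, Real.sqrt_lt' (div_pos (by linarith) (by linarith))]
    rw [div_pow, div_lt_div_iff₀ hx1 (by positivity)]
    have haux : (0 : ℝ) < 4 * x ^ 2 - 4 * x + 9801 := by nlinarith
    nlinarith [mul_pos hx1 haux]
  have hd : (12 * x ^ 2 + 17 * x - 99) / 70 <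
      3 * x ^ 2 - 2 * (x - 1) ^ 2 * s3 - 4 * x := by
    have h1 : 2 * (x - 1) ^ 2 * s3 < 2 * (x - 1) ^ 2 * (99 * (2 * x - 1) / (140 * (x - 1))) :=
      mul_lt_mul_of_pos_left hs3lt (by positivity)
    have h2 : 2 * (x - 1) ^ 2 * (99 * (2 * x - 1) / (140 * (x - 1))) =
        99 * (2 * x - 1) * (x - 1) / 70 := by
      field_simp
      ring
    rw [h2] at h1
    linarith [h1]
  have hdpos : 0 < 3 * x ^ 2 - 2 * (x - 1) ^ 2 * s3 - 4 * x := by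
    have h0 : 0 < (12 * x ^ 2 + 17 * x - 99) / 70 := by positivity
    linarith
  have hxpos : (0 : ℝ) < x := by linarith
  have hfr : x / (3 * x ^ 2 - 2 * (x - 1) ^ 2 * s3 - 4 * x) <
      x / ((12 * x ^ 2 + 17 * x - 99) / 70) :=
    div_lt_div_of_pos_left hxpos (by positivity) hd
  have hu4 : -1 - 70 * x / (12 * x ^ 2 + 17 * x - 99) <
      -1 - x / (3 * x ^ 2 - 2 * (x - 1) ^ 2 * s3 - 4 * x) := by
    have heq : x / ((12 * x ^ 2 + 17 * x - 99) / 70) =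
        70 * x / (12 * x ^ 2 + 17 * x - 99) := by
      rw [div_div_eq_mul_div]
      ring_nf
    rw [heq] at hfr
    linarith
  have hu3 : 4 * (x - 1) * (-3 * x + 4 - 2 * s2) / ((x - 2) * (9 * x - 10)) ≤
      -(12 * x * (x - 1)) / ((x - 2) * (9 * x - 10)) := by
    rw [div_le_div_iff₀ (mul_pos hx2 h9) (mul_pos hx2 h9)]
    nlinarith [mul_nonneg (mul_pos hx2 h9).le
      (mul_nonneg hx1.le (by linarith : (0:ℝ) ≤ 2 * s2 - 4))]
  have hmid : -(12 * x * (x - 1)) / ((x - 2) * (9 * x - 10)) <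
      -1 - 70 * x / (12 * x ^ 2 + 17 * x - 99) := by
    have heq2 : (-1 : ℝ) - 70 * x / (12 * x ^ 2 + 17 * x - 99) =
        (-(12 * x ^ 2 + 17 * x - 99) - 70 * x) / (12 * x ^ 2 + 17 * x - 99) := by
      rw [sub_div, neg_div, div_self hE.ne']
    rw [heq2, div_lt_div_iff₀ (mul_pos hx2 h9) hE]
    nlinarith [t5, t2, t3, t4]
  exact ⟨part1, part2, lt_of_le_of_lt hu3 (lt_trans hmid hu4)⟩
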